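/- (Nonlinear Gronwall inequality) Let ζ : [t₀,∞) → [0,∞) be continuous, C ≥ 0, 0 ≤ ϑ < 1, and a, b locally integrable non-negative functions on [t₀,∞) such that ζ(t) ≤ C + ∫_{t₀}^t (a(s)ζ(s) + b(s)ζ(s)^ϑ) ds for all t ≥ t₀. Then ζ(t) ≤ { C^{1−ϑ} exp[(1−ϑ)∫_{t₀}^t a(s)ds] + (1−ϑ)∫_{t₀}^t b(s) exp[(1−ϑ)∫_s^t a(r)dr] ds }^{1/(1−ϑ)} for all t ≥ t₀. -/

import Mathlib

open MeasureTheory intervalIntegral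

lemma cont_gronwall (t₀ T : ℝ) (hT : t₀ ≤ T) (ζ a b : ℝ → ℝ) (C ϑ : ℝ)
    (hC : 0 < C) (hϑ0 : 0 ≤ ϑ) (hϑ1 : ϑ < 1)
    (hζ : Continuous ζ) (ha : Continuous a) (hb : Continuous b)
    (hζ0 : ∀ t, 0 ≤ ζ t) (ha0 : ∀ t, 0 ≤ a t) (hb0 : ∀ t, 0 ≤ b t)
    (hineq : ∀ t ∈ Set.Icc t₀ T, ζ t ≤ C + ∫ s in t₀..t, (a s * ζ s + b s * ζ s ^ ϑ)) :
    ζ T ^ (1 - ϑ) ≤ C ^ (1 - ϑ) * Real.exp ((1 - ϑ) * ∫ s in t₀..T, a s) +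
      (1 - ϑ) * ∫ s in t₀..T, b s * Real.exp ((1 - ϑ) * ∫ r in s..T, a r) := by
  set c : ℝ := 1 - ϑ with hcdef
  have hc : 0 < c := by simp [hcdef]; linarith
  set g : ℝ → ℝ := fun s => a s * ζ s + b s * ζ s ^ ϑ with hgdef
  have hζϑ : Continuous (fun s => ζ s ^ ϑ) := hζ.rpow_const (fun x => Or.inr hϑ0)
  have hg : Continuous g := (ha.mul hζ).add (hb.mul hζϑ)
  have hg0 : ∀ s, t₀ ≤ s → 0 ≤ g s := fun s _ => add_nonneg
    (mul_nonneg (ha0 s) (hζ0 s)) (mul_nonneg (hb0 s) (Real.rpow_nonneg (hζ0 s) ϑ))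
  set A : ℝ → ℝ := fun t => ∫ s in t₀..t, a s with hAdef
  have hAd : ∀ t, HasDerivAt A (a t) t := fun t => (ha.integral_hasStrictDerivAt t₀ t).hasDerivAt
  have hAcont : Continuous A := by
    apply continuous_iff_continuousAt.2 (fun t => (hAd t).continuousAt)
  set V : ℝ → ℝ := fun t => C + ∫ s in t₀..t, g s with hVdef
  have hVd : ∀ t, HasDerivAt V (g t) t :=
    fun t => ((hg.integral_hasStrictDerivAt t₀ t).hasDerivAt).const_add C
  have hVcont : Continuous V := continuous_iff_continuousAt.2 (fun t => (hVd t).continuousAt)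
  have hVpos : ∀ t, t₀ ≤ t → 0 < V t := by
    intro t ht
    have : 0 ≤ ∫ s in t₀..t, g s :=
      intervalIntegral.integral_nonneg ht (fun s hs => hg0 s hs.1)
    simp only [hVdef]; linarith
  have hζV : ∀ t ∈ Set.Icc t₀ T, ζ t ≤ V t := hineq
  set W : ℝ → ℝ := fun t => V t ^ c with hWdef
  have hWcont : Continuous W := hVcont.rpow_const (fun x => Or.inr hc.le)
  have hWd : ∀ t, t₀ ≤ t → HasDerivAt W (g t * c * V t ^ (c - 1)) t :=
    fun t ht => (hVd t).rpow_const (Or.inl (hVpos t ht).ne')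
  set E : ℝ → ℝ := fun t => Real.exp (-(c * A t)) with hEdef
  have hEd : ∀ t, HasDerivAt E (-(c * a t) * E t) t := by
    intro t
    have h1 : HasDerivAt (fun u => -(c * A u)) (-(c * a t)) t := ((hAd t).const_mul c).neg
    have h2 := h1.exp
    rw [mul_comm] at h2
    exact h2
  have hEcont : Continuous E := continuous_iff_continuousAt.2 (fun t => (hEd t).continuousAt)
  have hEpos : ∀ t, 0 < E t := fun t => Real.exp_pos _
  set J : ℝ → ℝ := fun t => ∫ s in t₀..t, c * b s * E s with hJdef
  have hJint : Continuous (fun s => c * b s * E s) := ((continuous_const.mul hb).mul hEcont)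
  have hJd : ∀ t, HasDerivAt J (c * b t * E t) t :=
    fun t => (hJint.integral_hasStrictDerivAt t₀ t).hasDerivAt
  set Y : ℝ → ℝ := fun t => E t * W t - J t with hYdef
  have hYd : ∀ t, t₀ ≤ t → HasDerivAt Y
      ((-(c * a t) * E t) * W t + E t * (g t * c * V t ^ (c - 1)) - c * b t * E t) t :=
    fun t ht => ((hEd t).mul (hWd t ht)).sub (hJd t)
  have hYd0 : ∀ t ∈ Set.Icc t₀ T,
      (-(c * a t) * E t) * W t + E t * (g t * c * V t ^ (c - 1)) - c * b t * E t ≤ 0 := by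
    intro t ht
    have hVt := hVpos t ht.1
    have hVc1 : (0:ℝ) ≤ V t ^ (c - 1) := Real.rpow_nonneg hVt.le _
    have h1 : g t ≤ a t * V t + b t * V t ^ ϑ := by
      refine add_le_add (mul_le_mul_of_nonneg_left (hζV t ht) (ha0 t))
        (mul_le_mul_of_nonneg_left ?_ (hb0 t))
      exact Real.rpow_le_rpow (hζ0 t) (hζV t ht) hϑ0
    have h2 : V t ^ (c - 1) * g t ≤ V t ^ (c - 1) * (a t * V t + b t * V t ^ ϑ) :=
      mul_le_mul_of_nonneg_left h1 hVc1
    have h3 : V t ^ (c - 1) * (a t * V t + b t * V t ^ ϑ) = a t * W t + b t := by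
      have e1 : V t ^ (c - 1) * V t = V t ^ c := by
        nth_rewrite 2 [← Real.rpow_one (V t)]
        rw [← Real.rpow_add hVt]; ring_nf
      have e2 : V t ^ (c - 1) * V t ^ ϑ = 1 := by
        rw [← Real.rpow_add hVt]
        have : c - 1 + ϑ = 0 := by simp [hcdef]
        rw [this, Real.rpow_zero]
      simp only [hWdef]
      calc V t ^ (c - 1) * (a t * V t + b t * V t ^ ϑ)
          = a t * (V t ^ (c - 1) * V t) + b t * (V t ^ (c - 1) * V t ^ ϑ) := by ring
        _ = a t * V t ^ c + b t := by rw [e1, e2, mul_one]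
    have h4 : V t ^ (c - 1) * g t ≤ a t * W t + b t := le_of_le_of_eq h2 h3
    have hEt := (hEpos t).le
    have hW0 : 0 ≤ W t := Real.rpow_nonneg hVt.le _
    nlinarith [mul_le_mul_of_nonneg_left h4 (mul_nonneg hc.le hEt), hEpos t, hc,
      mul_nonneg (mul_nonneg hc.le hEt) (mul_nonneg (ha0 t) hW0)]
  have hanti : AntitoneOn Y (Set.Icc t₀ T) := by
    apply antitoneOn_of_deriv_nonpos (convex_Icc t₀ T)
      ((hEcont.mul hWcont).sub (continuous_iff_continuousAt.2
        (fun t => (hJd t).continuousAt))).continuousOn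
    · intro t ht
      rw [interior_Icc] at ht
      exact ((hYd t ht.1.le).differentiableAt).differentiableWithinAt
    · intro t ht
      rw [interior_Icc] at ht
      rw [show E * W - J = Y from rfl, (hYd t ht.1.le).deriv]
      exact hYd0 t ⟨ht.1.le, ht.2.le⟩
  have hYT : Y T ≤ Y t₀ := hanti (Set.left_mem_Icc.2 hT) (Set.right_mem_Icc.2 hT) hT
  have hYt0 : Y t₀ = C ^ c := by
    simp only [hYdef, hJdef, hEdef, hWdef, hVdef, hAdef, intervalIntegral.integral_same]
    simp
  rw [hYt0] at hYT
  -- hYT : E T * W T - J T ≤ C ^ c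
  have hET : E T * Real.exp (c * A T) = 1 := by
    simp only [hEdef]; rw [← Real.exp_add]; simp
  have key : W T ≤ (C ^ c + J T) * Real.exp (c * A T) := by
    have h5 : E T * W T ≤ C ^ c + J T := by simp only [hYdef] at hYT; linarith
    have := mul_le_mul_of_nonneg_right h5 (Real.exp_pos (c * A T)).le
    calc W T = (E T * Real.exp (c * A T)) * W T := by rw [hET, one_mul]
      _ = E T * W T * Real.exp (c * A T) := by ring
      _ ≤ (C ^ c + J T) * Real.exp (c * A T) := this
  have hJT : J T * Real.exp (c * A T) = c * ∫ s in t₀..T, b s * Real.exp (c * ∫ r in s..T, a r) := by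
    simp only [hJdef]
    calc (∫ s in t₀..T, c * b s * E s) * Real.exp (c * A T)
        = ∫ s in t₀..T, (c * b s * E s) * Real.exp (c * A T) :=
          (intervalIntegral.integral_mul_const _ _).symm
      _ = ∫ s in t₀..T, c * (b s * Real.exp (c * ∫ r in s..T, a r)) := by
          apply intervalIntegral.integral_congr
          intro s hs
          rw [Set.uIcc_of_le hT] at hs
          have hsub : ∫ r in s..T, a r = A T - A s :=
            (intervalIntegral.integral_interval_sub_left (ha.intervalIntegrable _ _)
              (ha.intervalIntegrable _ _)).symm
          simp only [hEdef]
          rw [hsub, mul_assoc, ← Real.exp_add]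
          ring_nf
      _ = c * ∫ s in t₀..T, b s * Real.exp (c * ∫ r in s..T, a r) :=
          intervalIntegral.integral_const_mul _ _
  have hfin : W T ≤ C ^ c * Real.exp (c * A T) +
      c * ∫ s in t₀..T, b s * Real.exp (c * ∫ r in s..T, a r) := by
    rw [← hJT]; calc W T ≤ (C ^ c + J T) * Real.exp (c * A T) := key
      _ = C ^ c * Real.exp (c * A T) + J T * Real.exp (c * A T) := by ring
  refine le_trans ?_ hfin
  exact Real.rpow_le_rpow (hζ0 T) (hζV T (Set.right_mem_Icc.2 hT)) hc.le

theorem nonlinear_gronwall (t₀ : ℝ) (ζ a b : ℝ → ℝ) (C ϑ : ℝ)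
    (hC : 0 ≤ C) (hϑ0 : 0 ≤ ϑ) (hϑ1 : ϑ < 1)
    (hζcont : ContinuousOn ζ (Set.Ici t₀))
    (hζ0 : ∀ t ∈ Set.Ici t₀, 0 ≤ ζ t)
    (ha0 : ∀ t ∈ Set.Ici t₀, 0 ≤ a t)
    (hb0 : ∀ t ∈ Set.Ici t₀, 0 ≤ b t)
    (haloc : ∀ t ≥ t₀, IntegrableOn a (Set.Icc t₀ t))
    (hbloc : ∀ t ≥ t₀, IntegrableOn b (Set.Icc t₀ t))
    (hineq : ∀ t ≥ t₀, ζ t ≤ C + ∫ s in t₀..t, (a s * ζ s + b s * ζ s ^ ϑ)) :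
    ∀ t ≥ t₀,
      ζ t ≤ (C ^ (1 - ϑ) * Real.exp ((1 - ϑ) * ∫ s in t₀..t, a s) +
        (1 - ϑ) * ∫ s in t₀..t, b s * Real.exp ((1 - ϑ) * ∫ r in s..t, a r)) ^ (1 / (1 - ϑ)) := by
  intro T hT
  set c : ℝ := 1 - ϑ with hcdef
  have hc : 0 < c := by simp only [hcdef, sub_pos]; exact hϑ1
  -- extend ζ to all of ℝ
  set ζ' : ℝ → ℝ := fun t => ζ (max t t₀) with hζ'def
  have hζ'cont : Continuous ζ' :=
    hζcont.comp_continuous (continuous_id.max continuous_const) (fun x => le_max_right x t₀)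
  have hζ'eq : ∀ t, t₀ ≤ t → ζ' t = ζ t := fun t ht => by
    simp only [hζ'def, max_eq_left ht]
  have hζ'0 : ∀ t, 0 ≤ ζ' t := fun t => hζ0 _ (Set.mem_Ici.2 (le_max_right _ _))
  -- bound for ζ' and ζ'^ϑ on [t₀, T]
  obtain ⟨M₁, hM₁⟩ := isCompact_Icc.exists_bound_of_continuousOn (s := Set.Icc t₀ T)
    hζ'cont.continuousOn
  have hM₁0 : 0 ≤ M₁ := le_trans (norm_nonneg _) (hM₁ t₀ (Set.left_mem_Icc.2 hT))
  set M : ℝ := max M₁ (M₁ ^ ϑ) with hMdef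
  have hM0 : 0 ≤ M := le_trans hM₁0 (le_max_left _ _)
  have hMb : ∀ s ∈ Set.Icc t₀ T, ζ' s ≤ M ∧ ζ' s ^ ϑ ≤ M := by
    intro s hs
    have h1 : ζ' s ≤ M₁ := le_trans (le_abs_self _) (hM₁ s hs)
    constructor
    · exact le_trans h1 (le_max_left _ _)
    · exact le_trans (Real.rpow_le_rpow (hζ'0 s) h1 hϑ0) (le_max_right _ _)
  -- integrability of a, b on [t₀, T]
  have haIT : IntervalIntegrable a volume t₀ T :=
    (intervalIntegrable_iff_integrableOn_Icc_of_le hT).2 (haloc T hT)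
  have hbIT : IntervalIntegrable b volume t₀ T :=
    (intervalIntegrable_iff_integrableOn_Icc_of_le hT).2 (hbloc T hT)
  have hsubuIcc : ∀ t ∈ Set.Icc t₀ T, Set.uIcc t₀ t ⊆ Set.uIcc t₀ T := by
    intro t ht
    rw [Set.uIcc_of_le hT, Set.uIcc_of_le ht.1]
    exact Set.Icc_subset_Icc le_rfl ht.2
  -- the quantities in the conclusion
  set Ia : ℝ := ∫ s in t₀..T, a s with hIadef
  set Ib : ℝ := ∫ s in t₀..T, b s * Real.exp (c * ∫ r in s..T, a r) with hIbdef
  have hIa0 : 0 ≤ Ia := intervalIntegral.integral_nonneg hT (fun s hs => ha0 s hs.1)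
  -- reduce to the power c
  suffices hsuf : ζ' T ^ c ≤ C ^ c * Real.exp (c * Ia) + c * Ib by
    have h1 := Real.rpow_le_rpow (Real.rpow_nonneg (hζ'0 T) c) hsuf
      (le_of_lt (by positivity : (0:ℝ) < 1 / c))
    rw [← Real.rpow_mul (hζ'0 T)] at h1
    rw [mul_one_div_cancel hc.ne', Real.rpow_one, hζ'eq T hT] at h1
    exact h1
  -- the primitive of a
  set As : ℝ → ℝ := fun s => ∫ r in t₀..s, a r with hAsdef
  have hAscont : ContinuousOn As (Set.Icc t₀ T) := by
    have := continuousOn_primitive_interval (a := t₀) (b := T) (μ := volume)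
      (f := a) (by rw [Set.uIcc_of_le hT]; exact haloc T hT)
    rwa [Set.uIcc_of_le hT] at this
  have hAsub : ∀ s ∈ Set.Icc t₀ T, (∫ r in s..T, a r) = Ia - As s := by
    intro s hs
    exact (intervalIntegral.integral_interval_sub_left haIT
      (haIT.mono_set (hsubuIcc s hs))).symm
  have hAsrange : ∀ s ∈ Set.Icc t₀ T, 0 ≤ As s ∧ (∫ r in s..T, a r) ≤ Ia := by
    intro s hs
    have h0 : 0 ≤ As s := intervalIntegral.integral_nonneg hs.1 (fun r hr => ha0 r hr.1)
    rw [hAsub s hs]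
    exact ⟨h0, by linarith⟩
  -- the δ-family of bounds
  set F : ℝ → ℝ := fun δ => (C + (2*M+1)*δ) ^ c * Real.exp (c*δ) * Real.exp (c * Ia) +
    c * Real.exp (c * δ) * (Ib + δ * Real.exp (c * Ia)) with hFdef
  have claim : ∀ δ, 0 < δ → ζ' T ^ c ≤ F δ := by
    intro δ hδ
    simp only [hFdef]
    -- approximations of a and b by continuous nonnegative functions
    have happrox : ∀ (f : ℝ → ℝ), IntegrableOn f (Set.Icc t₀ T) →
        (∀ x ∈ Set.Icc t₀ T, 0 ≤ f x) →
        ∃ f' : ℝ → ℝ, Continuous f' ∧ (∀ x, 0 ≤ f' x) ∧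
          ∀ s t, t₀ ≤ s → t ≤ T → s ≤ t → (∫ x in s..t, |f x - f' x|) ≤ δ := by
      intro f hfI hf0
      have hf1 : Integrable (Set.indicator (Set.Icc t₀ T) f) volume :=
        (integrable_indicator_iff measurableSet_Icc).2 hfI
      obtain ⟨g, -, hgle, hgcont, hgint⟩ := hf1.exists_hasCompactSupport_integral_sub_le hδ
      refine ⟨fun x => max (g x) 0, hgcont.max continuous_const,
        fun x => le_max_right _ _, ?_⟩
      intro s t hs ht hst
      have hIocsub : Set.Ioc s t ⊆ Set.Icc t₀ T :=
        le_trans Set.Ioc_subset_Icc_self (Set.Icc_subset_Icc hs ht)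
      have hptw : ∀ x ∈ Set.Icc t₀ T,
          |f x - max (g x) 0| ≤ ‖Set.indicator (Set.Icc t₀ T) f x - g x‖ := by
        intro x hx
        rw [Real.norm_eq_abs, Set.indicator_of_mem hx]
        rcases le_or_gt 0 (g x) with h | h
        · rw [max_eq_left h]
        · rw [max_eq_right h.le, sub_zero, abs_of_nonneg (hf0 x hx),
            abs_of_nonneg (by linarith [hf0 x hx])]
          linarith
      rw [intervalIntegral.integral_of_le hst]
      have hint1 : IntegrableOn (fun x => |f x - max (g x) 0|) (Set.Ioc s t) volume :=
        ((hfI.mono_set hIocsub).sub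
          ((hgcont.max continuous_const).integrableOn_Ioc)).abs
      calc (∫ x in Set.Ioc s t, |f x - max (g x) 0|)
          ≤ ∫ x in Set.Ioc s t, ‖Set.indicator (Set.Icc t₀ T) f x - g x‖ :=
            setIntegral_mono_on hint1 ((hf1.sub hgint).norm.integrableOn)
              measurableSet_Ioc (fun x hx => hptw x (hIocsub hx))
        _ ≤ ∫ x, ‖Set.indicator (Set.Icc t₀ T) f x - g x‖ :=
            setIntegral_le_integral (hf1.sub hgint).norm
              (Filter.Eventually.of_forall fun x => norm_nonneg _)
        _ ≤ δ := hgle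
    obtain ⟨a', ha'c, ha'0, ha'cl⟩ := happrox a (haloc T hT) (fun x hx => ha0 x hx.1)
    obtain ⟨b', hb'c, hb'0, hb'cl⟩ := happrox b (hbloc T hT) (fun x hx => hb0 x hx.1)
    have hζ'ϑcont : Continuous (fun s => ζ' s ^ ϑ) :=
      hζ'cont.rpow_const (fun _ => Or.inr hϑ0)
    set C' : ℝ := C + (2*M+1)*δ with hC'def
    have hC'pos : 0 < C' := by nlinarith
    -- transfer the integral inequality to ζ', a', b'
    have hineq' : ∀ t ∈ Set.Icc t₀ T,
        ζ' t ≤ C' + ∫ s in t₀..t, (a' s * ζ' s + b' s * ζ' s ^ ϑ) := by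
      intro t ht
      have haIt : IntervalIntegrable a volume t₀ t := haIT.mono_set (hsubuIcc t ht)
      have hbIt : IntervalIntegrable b volume t₀ t := hbIT.mono_set (hsubuIcc t ht)
      have hf : IntervalIntegrable (fun s => a s * ζ' s + b s * ζ' s ^ ϑ) volume t₀ t :=
        (haIt.mul_continuousOn hζ'cont.continuousOn).add
          (hbIt.mul_continuousOn hζ'ϑcont.continuousOn)
      have hg : IntervalIntegrable (fun s => a' s * ζ' s + b' s * ζ' s ^ ϑ) volume t₀ t :=
        ((ha'c.mul hζ'cont).add (hb'c.mul hζ'ϑcont)).intervalIntegrable _ _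
      have e0 : (∫ s in t₀..t, (a s * ζ s + b s * ζ s ^ ϑ))
          = ∫ s in t₀..t, (a s * ζ' s + b s * ζ' s ^ ϑ) := by
        apply intervalIntegral.integral_congr
        intro s hs
        rw [Set.uIcc_of_le ht.1] at hs
        simp only [hζ'eq s hs.1]
      have e1 : ζ t ≤ C + ∫ s in t₀..t, (a s * ζ' s + b s * ζ' s ^ ϑ) := by
        have := hineq t ht.1
        rwa [e0] at this
      have hia : IntervalIntegrable (fun s => |a s - a' s|) volume t₀ t :=
        (haIt.sub (ha'c.intervalIntegrable _ _)).abs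
      have hib : IntervalIntegrable (fun s => |b s - b' s|) volume t₀ t :=
        (hbIt.sub (hb'c.intervalIntegrable _ _)).abs
      have hdiff : (∫ s in t₀..t, (a s * ζ' s + b s * ζ' s ^ ϑ))
          - (∫ s in t₀..t, (a' s * ζ' s + b' s * ζ' s ^ ϑ))
          = ∫ s in t₀..t, ((a s - a' s) * ζ' s + (b s - b' s) * ζ' s ^ ϑ) := by
        rw [← intervalIntegral.integral_sub hf hg]
        apply intervalIntegral.integral_congr
        intro s _
        ring
      have hmono : (∫ s in t₀..t, ((a s - a' s) * ζ' s + (b s - b' s) * ζ' s ^ ϑ))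
          ≤ ∫ s in t₀..t, (M * |a s - a' s| + M * |b s - b' s|) := by
        apply intervalIntegral.integral_mono_on ht.1
        · exact ((haIt.sub (ha'c.intervalIntegrable _ _)).mul_continuousOn
            hζ'cont.continuousOn).add
            ((hbIt.sub (hb'c.intervalIntegrable _ _)).mul_continuousOn
              hζ'ϑcont.continuousOn)
        · exact (hia.const_mul M).add (hib.const_mul M)
        · intro s hs
          have hsT : s ∈ Set.Icc t₀ T := ⟨hs.1, le_trans hs.2 ht.2⟩
          obtain ⟨hMs1, hMs2⟩ := hMb s hsT
          have h1 : (a s - a' s) * ζ' s ≤ M * |a s - a' s| := by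
            calc (a s - a' s) * ζ' s ≤ |a s - a' s| * ζ' s :=
                  mul_le_mul_of_nonneg_right (le_abs_self _) (hζ'0 s)
              _ ≤ |a s - a' s| * M := mul_le_mul_of_nonneg_left hMs1 (abs_nonneg _)
              _ = M * |a s - a' s| := mul_comm _ _
          have h2 : (b s - b' s) * ζ' s ^ ϑ ≤ M * |b s - b' s| := by
            calc (b s - b' s) * ζ' s ^ ϑ ≤ |b s - b' s| * ζ' s ^ ϑ :=
                  mul_le_mul_of_nonneg_right (le_abs_self _)
                    (Real.rpow_nonneg (hζ'0 s) ϑ)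
              _ ≤ |b s - b' s| * M := mul_le_mul_of_nonneg_left hMs2 (abs_nonneg _)
              _ = M * |b s - b' s| := mul_comm _ _
          linarith
      have hsum : (∫ s in t₀..t, (M * |a s - a' s| + M * |b s - b' s|))
          = M * (∫ s in t₀..t, |a s - a' s|) + M * (∫ s in t₀..t, |b s - b' s|) := by
        rw [intervalIntegral.integral_add (hia.const_mul M) (hib.const_mul M),
          intervalIntegral.integral_const_mul, intervalIntegral.integral_const_mul]
      have hda := ha'cl t₀ t le_rfl ht.2 ht.1
      have hdb := hb'cl t₀ t le_rfl ht.2 ht.1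
      have hMa : M * (∫ s in t₀..t, |a s - a' s|) ≤ M * δ :=
        mul_le_mul_of_nonneg_left hda hM0
      have hMbb : M * (∫ s in t₀..t, |b s - b' s|) ≤ M * δ :=
        mul_le_mul_of_nonneg_left hdb hM0
      have := hζ'eq t ht.1
      simp only [hC'def]
      nlinarith
    -- apply the continuous-coefficient Gronwall lemma
    have hcg := cont_gronwall t₀ T hT ζ' a' b' C' ϑ hC'pos hϑ0 hϑ1
      hζ'cont ha'c hb'c hζ'0 ha'0 hb'0 hineq'
    rw [← hcdef] at hcg
    -- compare the primitives of a' and a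
    have hAcmp : ∀ s ∈ Set.Icc t₀ T, (∫ r in s..T, a' r) ≤ (∫ r in s..T, a r) + δ := by
      intro s hs
      have h1 : IntervalIntegrable a volume s T := haIT.mono_set
        (by rw [Set.uIcc_of_le hT, Set.uIcc_of_le hs.2]
            exact Set.Icc_subset_Icc hs.1 le_rfl)
      have h2 : IntervalIntegrable a' volume s T := ha'c.intervalIntegrable _ _
      have h3 : (∫ r in s..T, a' r) - (∫ r in s..T, a r) = ∫ r in s..T, (a' r - a r) :=
        (intervalIntegral.integral_sub h2 h1).symm
      have h4 : (∫ r in s..T, (a' r - a r)) ≤ ∫ r in s..T, |a r - a' r| := by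
        apply intervalIntegral.integral_mono_on hs.2 (h2.sub h1) (h1.sub h2).abs
        intro x _
        rw [abs_sub_comm]
        exact le_abs_self _
      have h5 := ha'cl s T hs.1 le_rfl hs.2
      linarith
    -- first term estimate
    have hterm1 : C' ^ c * Real.exp (c * ∫ s in t₀..T, a' s)
        ≤ C' ^ c * Real.exp (c*δ) * Real.exp (c * Ia) := by
      rw [mul_assoc, ← Real.exp_add]
      apply mul_le_mul_of_nonneg_left _ (Real.rpow_nonneg hC'pos.le _)
      apply Real.exp_le_exp.2
      have h6 := hAcmp t₀ (Set.left_mem_Icc.2 hT)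
      have h7 := mul_le_mul_of_nonneg_left h6 hc.le
      rw [hIadef]
      nlinarith
    -- second term estimate
    have hI2 : (∫ s in t₀..T, b' s * Real.exp (c * ∫ r in s..T, a' r))
        ≤ Real.exp (c*δ) * (Ib + δ * Real.exp (c * Ia)) := by
      have hA'prim : ∀ s, (∫ r in s..T, a' r)
          = (∫ r in t₀..T, a' r) - (∫ r in t₀..s, a' r) := fun s =>
        (intervalIntegral.integral_interval_sub_left (ha'c.intervalIntegrable _ _)
          (ha'c.intervalIntegrable _ _)).symm
      have hlhsint : IntervalIntegrable
          (fun s => b' s * Real.exp (c * ∫ r in s..T, a' r)) volume t₀ T := by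
        have hcontA' : Continuous (fun s => ∫ r in t₀..s, a' r) :=
          continuous_iff_continuousAt.2 fun t =>
            ((ha'c.integral_hasStrictDerivAt t₀ t).hasDerivAt).continuousAt
        have hcont2 : Continuous fun s => b' s *
            Real.exp (c * ((∫ r in t₀..T, a' r) - ∫ r in t₀..s, a' r)) :=
          hb'c.mul (Real.continuous_exp.comp
            (continuous_const.mul (continuous_const.sub hcontA')))
        have heq : (fun s => b' s * Real.exp (c * ∫ r in s..T, a' r))
            = fun s => b' s * Real.exp (c * ((∫ r in t₀..T, a' r) - ∫ r in t₀..s, a' r)) :=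
          funext fun s => by rw [hA'prim s]
        rw [heq]
        exact hcont2.intervalIntegrable _ _
      have hAscont' : ContinuousOn (fun s => Real.exp (c * (Ia - As s))) (Set.Icc t₀ T) :=
        Real.continuous_exp.comp_continuousOn
          ((continuousOn_const.sub hAscont).const_smul c)
      have hbexp_int : IntervalIntegrable (fun s => b s * Real.exp (c * (Ia - As s)))
          volume t₀ T :=
        hbIT.mul_continuousOn (by rw [Set.uIcc_of_le hT]; exact hAscont')
      have habs_int : IntervalIntegrable (fun s => |b s - b' s| * Real.exp (c * Ia))
          volume t₀ T :=
        ((hbIT.sub (hb'c.intervalIntegrable _ _)).abs).mul_const _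
      have hrhsint : IntervalIntegrable (fun s => Real.exp (c*δ) *
          (b s * Real.exp (c * (Ia - As s)) + |b s - b' s| * Real.exp (c * Ia)))
          volume t₀ T := (hbexp_int.add habs_int).const_mul _
      have hmono2 : (∫ s in t₀..T, b' s * Real.exp (c * ∫ r in s..T, a' r))
          ≤ ∫ s in t₀..T, Real.exp (c*δ) *
            (b s * Real.exp (c * (Ia - As s)) + |b s - b' s| * Real.exp (c * Ia)) := by
        apply intervalIntegral.integral_mono_on hT hlhsint hrhsint
        intro s hs
        have hQ := hAcmp s hs
        have hPIa := (hAsrange s hs).2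
        have hP0 : (0:ℝ) ≤ ∫ r in s..T, a r :=
          intervalIntegral.integral_nonneg hs.2 (fun r hr => ha0 r (le_trans hs.1 hr.1))
        have e1 : Real.exp (c * ∫ r in s..T, a' r)
            ≤ Real.exp (c*δ) * Real.exp (c * ∫ r in s..T, a r) := by
          rw [← Real.exp_add]
          apply Real.exp_le_exp.2
          nlinarith [mul_le_mul_of_nonneg_left hQ hc.le]
        have e2 : b' s ≤ b s + |b s - b' s| := by
          have := le_abs_self (b' s - b s)
          rw [abs_sub_comm] at this
          linarith
        have e3 : Real.exp (c * ∫ r in s..T, a r) ≤ Real.exp (c * Ia) :=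
          Real.exp_le_exp.2 (mul_le_mul_of_nonneg_left hPIa hc.le)
        have hbs0 : 0 ≤ b s := hb0 s hs.1
        show b' s * Real.exp (c * ∫ r in s..T, a' r) ≤ Real.exp (c*δ) *
          (b s * Real.exp (c * (Ia - As s)) + |b s - b' s| * Real.exp (c * Ia))
        rw [← hAsub s hs]
        calc b' s * Real.exp (c * ∫ r in s..T, a' r)
            ≤ b' s * (Real.exp (c*δ) * Real.exp (c * ∫ r in s..T, a r)) :=
              mul_le_mul_of_nonneg_left e1 (hb'0 s)
          _ ≤ (b s + |b s - b' s|) * (Real.exp (c*δ) * Real.exp (c * ∫ r in s..T, a r)) :=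
              mul_le_mul_of_nonneg_right e2 (by positivity)
          _ = Real.exp (c*δ) * (b s * Real.exp (c * ∫ r in s..T, a r)
              + |b s - b' s| * Real.exp (c * ∫ r in s..T, a r)) := by ring
          _ ≤ Real.exp (c*δ) * (b s * Real.exp (c * ∫ r in s..T, a r)
              + |b s - b' s| * Real.exp (c * Ia)) := by
              apply mul_le_mul_of_nonneg_left _ (Real.exp_nonneg _)
              have h9 := mul_le_mul_of_nonneg_left e3 (abs_nonneg (b s - b' s))
              linarith
      have hIbeq : (∫ s in t₀..T, b s * Real.exp (c * (Ia - As s))) = Ib := by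
        rw [hIbdef]
        apply intervalIntegral.integral_congr
        intro s hs
        rw [Set.uIcc_of_le hT] at hs
        simp only [hAsub s hs]
      have hsplit : (∫ s in t₀..T, Real.exp (c*δ) *
          (b s * Real.exp (c * (Ia - As s)) + |b s - b' s| * Real.exp (c * Ia)))
          = Real.exp (c*δ) * ((∫ s in t₀..T, b s * Real.exp (c * (Ia - As s)))
            + ∫ s in t₀..T, |b s - b' s| * Real.exp (c * Ia)) := by
        rw [intervalIntegral.integral_const_mul,
          intervalIntegral.integral_add hbexp_int habs_int]
      have habsle : (∫ s in t₀..T, |b s - b' s| * Real.exp (c * Ia))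
          ≤ δ * Real.exp (c * Ia) := by
        rw [intervalIntegral.integral_mul_const]
        exact mul_le_mul_of_nonneg_right (hb'cl t₀ T le_rfl le_rfl hT)
          (Real.exp_nonneg _)
      have hexpδ0 : (0:ℝ) < Real.exp (c*δ) := Real.exp_pos _
      calc (∫ s in t₀..T, b' s * Real.exp (c * ∫ r in s..T, a' r))
          ≤ Real.exp (c*δ) * ((∫ s in t₀..T, b s * Real.exp (c * (Ia - As s)))
            + ∫ s in t₀..T, |b s - b' s| * Real.exp (c * Ia)) := by
            rw [← hsplit]; exact hmono2
        _ ≤ Real.exp (c*δ) * (Ib + δ * Real.exp (c * Ia)) := by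
            rw [hIbeq]
            exact mul_le_mul_of_nonneg_left (by linarith) hexpδ0.le
    have hfinal := mul_le_mul_of_nonneg_left hI2 hc.le
    nlinarith [hcg, hterm1]
  -- pass to the limit δ → 0⁺
  have hFcont : ContinuousAt F 0 := by
    have h1 : ContinuousAt (fun δ : ℝ => (C + (2*M+1)*δ) ^ c) 0 := by
      apply ContinuousAt.rpow_const
      · exact (continuous_const.add (continuous_const.mul continuous_id)).continuousAt
      · exact Or.inr hc.le
    have h2 : ContinuousAt (fun δ : ℝ => Real.exp (c * δ)) 0 :=
      (Real.continuous_exp.comp (continuous_const.mul continuous_id)).continuousAt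
    exact ((h1.mul h2).mul continuousAt_const).add
      ((continuousAt_const.mul h2).mul (continuousAt_const.add
        ((continuous_id.mul continuous_const).continuousAt)))
  have hF0 : F 0 = C ^ c * Real.exp (c * Ia) + c * Ib := by
    simp [hFdef]
  have htend : Filter.Tendsto F (nhdsWithin 0 (Set.Ioi 0)) (nhds (C ^ c * Real.exp (c * Ia) + c * Ib)) := by
    rw [← hF0]
    exact hFcont.continuousWithinAt.tendsto
  exact ge_of_tendsto htend (Filter.eventually_iff_exists_mem.2
    ⟨Set.Ioi 0, self_mem_nhdsWithin, fun δ hδ => claim δ hδ⟩)
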